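/- Let T be a finite rooted tree in which every vertex has at most k children, and let Φ: 2^{V(T)} → ℝ₊ be a superadditive set function, i.e. Φ(V₁ ∪ V₂) ≥ Φ(V₁) + Φ(V₂) whenever V₁ ∩ V₂ = ∅, with Φ(V(T)) > 0. Then there is a constant C(k) > 0 such that for every n ∈ ℕ there exists a partition of T into at most C(k)·n subtrees T_j such that Φ(V(T_j)) ≤ (k+2) Φ(V(T))/n for every j with |V(T_j)| ≥ 2. -/

import Mathlib

namespace TreePartition
open SimpleGraph Finset

variable {V : Type} [Fintype V] [DecidableEq V] (G : SimpleGraph V) (root : V)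

set_option linter.unusedSectionVars false

open scoped Classical

/-- The subtree rooted at `ξ`: vertices `η` such that `ξ` lies on the geodesic from root to `η`. -/
noncomputable def subF (ξ : V) : Finset V :=
  Finset.univ.filter (fun η => G.dist root η = G.dist root ξ + G.dist ξ η)

/-- The children of `ξ`. -/
noncomputable def childS (ξ : V) : Finset V :=
  Finset.univ.filter (fun c => G.Adj ξ c ∧ G.dist root c = G.dist root ξ + 1)

variable {G root}

lemma mem_subF {ξ η : V} : η ∈ subF G root ξ ↔ G.dist root η = G.dist root ξ + G.dist ξ η := by
  simp [subF]

lemma mem_childS {ξ c : V} : c ∈ childS G root ξ ↔ G.Adj ξ c ∧ G.dist root c = G.dist root ξ + 1 := by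
  simp [childS]

lemma mem_subF_self (ξ : V) : ξ ∈ subF G root ξ := by simp [mem_subF]

lemma subF_root : subF G root root = Finset.univ := by
  ext η; simp [mem_subF]

lemma dist_child {ξ c η : V} (hc : G.Connected) (hch : c ∈ childS G root ξ)
    (hη : η ∈ subF G root c) : G.dist ξ η = 1 + G.dist c η := by
  obtain ⟨hadj, hdc⟩ := mem_childS.1 hch
  rw [mem_subF] at hη
  have h1 : G.dist ξ c = 1 := dist_eq_one_iff_adj.2 hadj
  have hle : G.dist ξ η ≤ 1 + G.dist c η := by
    calc G.dist ξ η ≤ G.dist ξ c + G.dist c η := hc.dist_triangle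
    _ = 1 + G.dist c η := by rw [h1]
  have hge : G.dist root η ≤ G.dist root ξ + G.dist ξ η := hc.dist_triangle
  omega

lemma subF_child_subset' (hc : G.Connected) {ξ c : V} (hch : c ∈ childS G root ξ) :
    subF G root c ⊆ subF G root ξ := by
  intro η hη
  have hd := dist_child hc hch hη
  obtain ⟨hadj, hdc⟩ := mem_childS.1 hch
  rw [mem_subF] at hη ⊢
  omega

lemma root_not_mem_child (hc : G.Connected) {ξ c : V} (hch : c ∈ childS G root ξ) :
    ξ ∉ subF G root c := by
  intro h
  obtain ⟨hadj, hdc⟩ := mem_childS.1 hch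
  rw [mem_subF] at h
  have : G.dist root ξ ≤ G.dist root ξ := le_refl _
  have hpos : G.dist c ξ ≠ 0 := by
    intro h0
    rw [h0] at h
    omega
  omega

lemma child_step (hc : G.Connected) {ξ η : V} (hη : η ∈ subF G root ξ) (hne : η ≠ ξ) :
    ∃ c ∈ childS G root ξ, η ∈ subF G root c := by
  rw [mem_subF] at hη
  have hd0 : G.dist ξ η ≠ 0 := by
    rw [Ne, SimpleGraph.dist_eq_zero_iff_eq_or_not_reachable]
    push_neg
    exact ⟨fun h => hne h.symm, hc ξ η⟩
  obtain ⟨p, hp⟩ := (hc ξ η).exists_walk_length_eq_dist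
  cases p with
  | nil => exact absurd rfl hne.symm
  | @cons _ c _ hadj q =>
    refine ⟨c, ?_, ?_⟩
    · have hq : G.dist c η ≤ q.length := SimpleGraph.dist_le q
      have hlen : q.length + 1 = G.dist ξ η := by
        simpa [SimpleGraph.Walk.length_cons] using hp
      have h1 : G.dist ξ c = 1 := dist_eq_one_iff_adj.2 hadj
      have htr1 : G.dist root c ≤ G.dist root ξ + G.dist ξ c := hc.dist_triangle
      have htr2 : G.dist root η ≤ G.dist root c + G.dist c η := hc.dist_triangle
      rw [mem_childS]
      exact ⟨hadj, by omega⟩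
    · have hq : G.dist c η ≤ q.length := SimpleGraph.dist_le q
      have hlen : q.length + 1 = G.dist ξ η := by
        simpa [SimpleGraph.Walk.length_cons] using hp
      have h1 : G.dist ξ c = 1 := dist_eq_one_iff_adj.2 hadj
      have htr1 : G.dist root c ≤ G.dist root ξ + G.dist ξ c := hc.dist_triangle
      have htr2 : G.dist root η ≤ G.dist root c + G.dist c η := hc.dist_triangle
      have htr3 : G.dist ξ η ≤ G.dist ξ c + G.dist c η := hc.dist_triangle
      rw [mem_subF]
      omega

/-- every vertex on a geodesic from `c` to a vertex of the subtree of `c` is in the subtree. -/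
lemma support_subset_subF (hc : G.Connected) {c η : V} (hη : η ∈ subF G root c)
    {p : G.Walk c η} (hp : p.length = G.dist c η) : ∀ z ∈ p.support, z ∈ subF G root c := by
  intro z hz
  obtain ⟨q, r, hqr⟩ := SimpleGraph.Walk.mem_support_iff_exists_append.1 hz
  have hq : G.dist c z ≤ q.length := SimpleGraph.dist_le q
  have hr : G.dist z η ≤ r.length := SimpleGraph.dist_le r
  have hlen : q.length + r.length = G.dist c η := by
    rw [← hp, hqr, SimpleGraph.Walk.length_append]
  have htr : G.dist c η ≤ G.dist c z + G.dist z η := hc.dist_triangle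
  have heq : G.dist c z + G.dist z η = G.dist c η := by omega
  rw [mem_subF] at hη ⊢
  have h1 : G.dist root z ≤ G.dist root c + G.dist c z := hc.dist_triangle
  have h2 : G.dist root η ≤ G.dist root z + G.dist z η := hc.dist_triangle
  omega

lemma subF_child_disjoint (hT : G.IsTree) {ξ c c' : V} (hch : c ∈ childS G root ξ)
    (hch' : c' ∈ childS G root ξ) (hne : c ≠ c') :
    Disjoint (subF G root c) (subF G root c') := by
  have hc : G.Connected := hT.isConnected
  rw [Finset.disjoint_left]
  intro η hη hη'
  -- build two distinct paths from ξ to η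
  obtain ⟨p, hp⟩ := (hc c η).exists_walk_length_eq_dist
  obtain ⟨p', hp'⟩ := (hc c' η).exists_walk_length_eq_dist
  have hPp : p.IsPath := p.isPath_of_length_eq_dist hp
  have hPp' : p'.IsPath := p'.isPath_of_length_eq_dist hp'
  have hξp : ξ ∉ p.support := fun h => root_not_mem_child hc hch (support_subset_subF hc hη hp _ h)
  have hξp' : ξ ∉ p'.support :=
    fun h => root_not_mem_child hc hch' (support_subset_subF hc hη' hp' _ h)
  have hadj : G.Adj ξ c := (mem_childS.1 hch).1
  have hadj' : G.Adj ξ c' := (mem_childS.1 hch').1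
  have hW : (SimpleGraph.Walk.cons hadj p).IsPath := hPp.cons hξp
  have hW' : (SimpleGraph.Walk.cons hadj' p').IsPath := hPp'.cons hξp'
  have := (hT.existsUnique_path ξ η).unique hW hW'
  have hsupp := congrArg SimpleGraph.Walk.support this
  rw [SimpleGraph.Walk.support_cons, SimpleGraph.Walk.support_cons,
    p.support_eq_cons, p'.support_eq_cons] at hsupp
  simp at hsupp
  exact hne (by have h := congrArg List.head? hsupp; rw [p.support_eq_cons, p'.support_eq_cons, List.head?_cons, List.head?_cons] at h; exact Option.some.inj h)

lemma subF_eq_insert (hc : G.Connected) (ξ : V) :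
    subF G root ξ = insert ξ ((childS G root ξ).sup (subF G root)) := by
  ext η
  simp only [Finset.mem_insert, Finset.mem_sup]
  constructor
  · intro h
    by_cases hne : η = ξ
    · exact Or.inl hne
    · obtain ⟨c, hc1, hc2⟩ := child_step hc h hne
      exact Or.inr ⟨c, hc1, hc2⟩
  · rintro (rfl | ⟨c, hc1, hc2⟩)
    · exact mem_subF_self _
    · exact subF_child_subset' hc hc1 hc2

lemma card_subF_child_lt (hc : G.Connected) {ξ c : V} (hch : c ∈ childS G root ξ) :
    (subF G root c).card < (subF G root ξ).card := by
  apply Finset.card_lt_card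
  rw [Finset.ssubset_iff_of_subset (subF_child_subset' hc hch)]
  exact ⟨ξ, mem_subF_self ξ, root_not_mem_child hc hch⟩

end TreePartition

-- connectivity & Phi helpers, to append
namespace TreePartition
open SimpleGraph Finset

variable {V : Type} [Fintype V] [DecidableEq V] {G : SimpleGraph V} {root : V}

/-- connectivity of the induced subgraph on a finset -/
def ConnIn (G : SimpleGraph V) (s : Finset V) : Prop := (G.induce (↑s : Set V)).Connected

lemma connIn_singleton (G : SimpleGraph V) (x : V) : ConnIn G {x} := by
  unfold ConnIn
  rw [SimpleGraph.connected_iff]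
  refine ⟨fun a b => ?_, ⟨⟨x, by simp⟩⟩⟩
  have : a = b := by
    ext
    have ha := a.2; have hb := b.2
    simp at ha hb
    rw [ha, hb]
  rw [this]

lemma connIn_union (G : SimpleGraph V) {A B : Finset V} {a b : V} (hA : ConnIn G A)
    (hB : ConnIn G B) (ha : a ∈ A) (hb : b ∈ B) (hadj : G.Adj a b) : ConnIn G (A ∪ B) := by
  unfold ConnIn
  rw [Finset.coe_union]
  exact SimpleGraph.connected_induce_union hA.preconnected hB.preconnected (by simpa using ha) (by simpa using hb) hadj

lemma insert_sup_insert (ξ c : V) (C : Finset V) (O : V → Finset V) :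
    insert ξ ((insert c C).sup O) = insert ξ (C.sup O) ∪ O c := by
  ext z
  simp only [Finset.mem_insert, Finset.mem_union, Finset.mem_sup]
  constructor
  · rintro (rfl | ⟨i, rfl | hi, hz⟩)
    · exact Or.inl (Or.inl rfl)
    · exact Or.inr hz
    · exact Or.inl (Or.inr ⟨i, hi, hz⟩)
  · rintro ((rfl | ⟨i, hi, hz⟩) | hz)
    · exact Or.inl rfl
    · exact Or.inr ⟨i, Or.inr hi, hz⟩
    · exact Or.inr ⟨c, Or.inl rfl, hz⟩

lemma connIn_insert_sup (G : SimpleGraph V) (ξ : V) (C : Finset V) (O : V → Finset V)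
    (h1 : ∀ c ∈ C, G.Adj ξ c) (h2 : ∀ c ∈ C, O c = ∅ ∨ (c ∈ O c ∧ ConnIn G (O c))) :
    ConnIn G (insert ξ (C.sup O)) := by
  induction C using Finset.induction_on with
  | empty => simpa using connIn_singleton G ξ
  | @insert c C hc ih =>
    rw [insert_sup_insert]
    rcases h2 c (Finset.mem_insert_self c C) with h | ⟨hco, hcC⟩
    · rw [h]
      simpa using ih (fun d hd => h1 d (Finset.mem_insert_of_mem hd))
        (fun d hd => h2 d (Finset.mem_insert_of_mem hd))
    · exact connIn_union G
        (ih (fun d hd => h1 d (Finset.mem_insert_of_mem hd))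
          (fun d hd => h2 d (Finset.mem_insert_of_mem hd)))
        hcC (Finset.mem_insert_self ξ _) hco (h1 c (Finset.mem_insert_self c C))

variable {Φ : Finset V → ℝ}

lemma phi_empty (hsup : ∀ s t : Finset V, Disjoint s t → Φ s + Φ t ≤ Φ (s ∪ t))
    (h0 : ∀ s, 0 ≤ Φ s) : Φ (∅ : Finset V) = 0 := by
  have := hsup ∅ ∅ (by simp)
  simp at this
  linarith [h0 (∅ : Finset V)]

lemma phi_mono (hsup : ∀ s t : Finset V, Disjoint s t → Φ s + Φ t ≤ Φ (s ∪ t))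
    (h0 : ∀ s, 0 ≤ Φ s) {s t : Finset V} (hst : s ⊆ t) : Φ s ≤ Φ t := by
  have h := hsup s (t \ s) (Finset.disjoint_sdiff)
  rw [Finset.union_sdiff_of_subset hst] at h
  linarith [h0 (t \ s)]

lemma phi_sum_le (hsup : ∀ s t : Finset V, Disjoint s t → Φ s + Φ t ≤ Φ (s ∪ t))
    (h0 : ∀ s, 0 ≤ Φ s) (F : Finset (Finset V))
    (hdisj : ∀ a ∈ F, ∀ b ∈ F, a ≠ b → Disjoint a b) :
    ∑ s ∈ F, Φ s ≤ Φ (F.sup id) := by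
  induction F using Finset.induction_on with
  | empty => simp [phi_empty hsup h0]
  | @insert a F ha ih =>
    rw [Finset.sum_insert ha, Finset.sup_insert]
    have hd : Disjoint a (F.sup id) := by
      rw [Finset.disjoint_sup_right]
      intro b hb
      exact hdisj a (Finset.mem_insert_self a F) b (Finset.mem_insert_of_mem hb)
        (fun h => ha (h ▸ hb))
    calc Φ a + ∑ s ∈ F, Φ s ≤ Φ a + Φ (F.sup id) := by
          linarith [ih (fun x hx y hy hxy =>
            hdisj x (Finset.mem_insert_of_mem hx) y (Finset.mem_insert_of_mem hy) hxy)]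
      _ ≤ Φ (a ∪ F.sup id) := hsup _ _ hd
      _ = Φ (a ⊔ F.sup id) := rfl

end TreePartition

namespace TreePartition
open SimpleGraph Finset

variable {V : Type} [Fintype V] [DecidableEq V]

/-- Specification of a partial partition of the subtree at `ξ`:
closed parts `P`, event witnesses `W`, and open part `O`. -/
structure Spec (G : SimpleGraph V) (root : V) (Φ : Finset V → ℝ) (τ : ℝ) (k : ℕ) (ξ : V)
    (P W : Finset (Finset V)) (O : Finset V) : Prop where
  nonempty : ∀ p ∈ P, p.Nonempty
  conn : ∀ p ∈ P, ConnIn G p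
  small : ∀ p ∈ P, 2 ≤ p.card → Φ p ≤ τ
  pdisj : ∀ p ∈ P, ∀ q ∈ P, p ≠ q → Disjoint p q
  podisj : ∀ p ∈ P, Disjoint p O
  cover : P.sup id ∪ O = subF G root ξ
  ospec : O = ∅ ∨ (ξ ∈ O ∧ ConnIn G O ∧ Φ O ≤ τ)
  wbig : ∀ w ∈ W, τ < Φ w
  wsub : ∀ w ∈ W, w ⊆ P.sup id
  wdisj : ∀ w ∈ W, ∀ w' ∈ W, w ≠ w' → Disjoint w w'
  count : P.card ≤ (k + 1) * W.card

lemma main_rec {G : SimpleGraph V} {root : V} (hT : G.IsTree) {k : ℕ}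
    (hk : ∀ ξ : V, (childS G root ξ).card ≤ k)
    (Φ : Finset V → ℝ) (h0 : ∀ s, 0 ≤ Φ s)
    (hsup : ∀ s t : Finset V, Disjoint s t → Φ s + Φ t ≤ Φ (s ∪ t))
    (τ : ℝ) (hτ : 0 < τ) :
    ∀ N : ℕ, ∀ ξ : V, (subF G root ξ).card ≤ N →
      ∃ (P W : Finset (Finset V)) (O : Finset V), Spec G root Φ τ k ξ P W O := by
  intro N
  induction N with
  | zero =>
    intro ξ h
    have := Finset.card_pos.2 ⟨ξ, mem_subF_self (G := G) (root := root) ξ⟩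
    omega
  | succ N ih =>
    intro ξ hcard
    have hc : G.Connected := hT.isConnected
    set C := childS G root ξ with hC
    have hadjC : ∀ c ∈ C, G.Adj ξ c := fun c hc' => (mem_childS.1 hc').1
    have Hc : ∀ c : V, ∃ (P W : Finset (Finset V)) (O : Finset V),
        c ∈ C → Spec G root Φ τ k c P W O := by
      intro c
      by_cases hcC : c ∈ C
      · obtain ⟨P, W, O, h⟩ := ih c (by have := card_subF_child_lt hc hcC; omega)
        exact ⟨P, W, O, fun _ => h⟩
      · exact ⟨∅, ∅, ∅, fun h => absurd h hcC⟩
    choose Pf Wf Of hf using Hc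
    -- basic containments
    have F1 : ∀ c ∈ C, ∀ p ∈ Pf c, p ⊆ subF G root c := by
      intro c hcC p hp
      calc p ⊆ (Pf c).sup id := Finset.le_sup (f := id) hp
        _ ⊆ (Pf c).sup id ∪ Of c := Finset.subset_union_left
        _ = subF G root c := (hf c hcC).cover
    have F2 : ∀ c ∈ C, Of c ⊆ subF G root c := by
      intro c hcC
      calc Of c ⊆ (Pf c).sup id ∪ Of c := Finset.subset_union_right
        _ = subF G root c := (hf c hcC).cover
    have F3 : ∀ c ∈ C, ∀ w ∈ Wf c, w ⊆ subF G root c := by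
      intro c hcC w hw
      calc w ⊆ (Pf c).sup id := (hf c hcC).wsub w hw
        _ ⊆ (Pf c).sup id ∪ Of c := Finset.subset_union_left
        _ = subF G root c := (hf c hcC).cover
    have F4 : ∀ c ∈ C, ξ ∉ subF G root c := fun c hcC => root_not_mem_child hc hcC
    have F5 : ∀ c ∈ C, ∀ c' ∈ C, c ≠ c' → Disjoint (subF G root c) (subF G root c') :=
      fun c hc1 c' hc2 hne => subF_child_disjoint hT hc1 hc2 hne
    set Pstar := C.biUnion Pf with hPstar
    set Wstar := C.biUnion Wf with hWstar
    set U : Finset V := insert ξ (C.sup Of) with hU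
    -- membership
    have hmemP : ∀ p, p ∈ Pstar ↔ ∃ c ∈ C, p ∈ Pf c := fun p => Finset.mem_biUnion
    have hmemW : ∀ w, w ∈ Wstar ↔ ∃ c ∈ C, w ∈ Wf c := fun w => Finset.mem_biUnion
    have hPsub : ∀ p ∈ Pstar, ∃ c ∈ C, p ⊆ subF G root c := by
      intro p hp
      obtain ⟨c, hc1, hc2⟩ := (hmemP p).1 hp
      exact ⟨c, hc1, F1 c hc1 p hc2⟩
    -- pairwise disjointness of Pstar
    have hPdisjoint : ∀ p ∈ Pstar, ∀ q ∈ Pstar, p ≠ q → Disjoint p q := by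
      intro p hp q hq hne
      obtain ⟨c, hc1, hc2⟩ := (hmemP p).1 hp
      obtain ⟨c', hc1', hc2'⟩ := (hmemP q).1 hq
      by_cases hcc : c = c'
      · exact (hf c hc1).pdisj p hc2 q (hcc ▸ hc2') hne
      · exact (F5 c hc1 c' hc1' hcc).mono (F1 c hc1 p hc2) (F1 c' hc1' q hc2')
    -- Pstar parts disjoint from each open set
    have hPO : ∀ p ∈ Pstar, ∀ c' ∈ C, Disjoint p (Of c') := by
      intro p hp c' hc1'
      obtain ⟨c, hc1, hc2⟩ := (hmemP p).1 hp
      by_cases hcc : c = c'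
      · exact hcc ▸ (hf c hc1).podisj p hc2
      · exact (F5 c hc1 c' hc1' hcc).mono (F1 c hc1 p hc2) (F2 c' hc1')
    have hxiP : ∀ p ∈ Pstar, ξ ∉ p := by
      intro p hp hxi
      obtain ⟨c, hc1, hc2⟩ := hPsub p hp
      exact F4 c hc1 (hc2 hxi)
    have hPU : ∀ p ∈ Pstar, Disjoint p U := by
      intro p hp
      rw [hU, Finset.disjoint_insert_right, Finset.disjoint_sup_right]
      exact ⟨hxiP p hp, fun c hc' => hPO p hp c hc'⟩
    -- cover identity
    have hcover : insert ξ (Pstar.sup id ∪ C.sup Of) = subF G root ξ := by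
      rw [subF_eq_insert hc ξ, ← hC]
      congr 1
      rw [hPstar, Finset.sup_biUnion]
      rw [show (C.sup fun c => (Pf c).sup id) ∪ C.sup Of
          = C.sup ((fun c => (Pf c).sup id) ⊔ Of) from (Finset.sup_sup).symm]
      exact Finset.sup_congr rfl (fun c hcC => by
        simpa using (hf c hcC).cover)
    -- Wstar properties
    have hWbig : ∀ w ∈ Wstar, τ < Φ w := by
      intro w hw
      obtain ⟨c, hc1, hc2⟩ := (hmemW w).1 hw
      exact (hf c hc1).wbig w hc2
    have hWne : ∀ w ∈ Wstar, w.Nonempty := by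
      intro w hw
      rw [Finset.nonempty_iff_ne_empty]
      intro h
      have := hWbig w hw
      rw [h, phi_empty hsup h0] at this
      linarith
    have hWsubtree : ∀ w ∈ Wstar, ∃ c ∈ C, w ⊆ subF G root c ∧ w ⊆ (Pf c).sup id := by
      intro w hw
      obtain ⟨c, hc1, hc2⟩ := (hmemW w).1 hw
      exact ⟨c, hc1, F3 c hc1 w hc2, (hf c hc1).wsub w hc2⟩
    have hWdisj : ∀ w ∈ Wstar, ∀ w' ∈ Wstar, w ≠ w' → Disjoint w w' := by
      intro w hw w' hw' hne
      obtain ⟨c, hc1, hc2⟩ := (hmemW w).1 hw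
      obtain ⟨c', hc1', hc2'⟩ := (hmemW w').1 hw'
      by_cases hcc : c = c'
      · exact (hf c hc1).wdisj w hc2 w' (hcc ▸ hc2') hne
      · exact (F5 c hc1 c' hc1' hcc).mono (F3 c hc1 w hc2) (F3 c' hc1' w' hc2')
    have hWsub' : ∀ w ∈ Wstar, w ⊆ Pstar.sup id := by
      intro w hw
      obtain ⟨c, hc1, hc2⟩ := (hmemW w).1 hw
      calc w ⊆ (Pf c).sup id := (hf c hc1).wsub w hc2
        _ ⊆ Pstar.sup id := Finset.sup_mono (Finset.subset_biUnion_of_mem Pf hc1)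
    -- counting
    have hWcard : Wstar.card = ∑ c ∈ C, (Wf c).card := by
      apply Finset.card_biUnion
      intro c hc1 c' hc1' hne
      show Disjoint (Wf c) (Wf c')
      rw [Finset.disjoint_left]
      intro w hw hw'
      have h1 := F3 c hc1 w hw
      have h2 := F3 c' hc1' w hw'
      obtain ⟨x, hx⟩ := hWne w ((hmemW w).2 ⟨c, hc1, hw⟩)
      exact Finset.disjoint_left.1 (F5 c hc1 c' hc1' hne) (h1 hx) (h2 hx)
    have hPcount : Pstar.card ≤ (k + 1) * Wstar.card := by
      calc Pstar.card ≤ ∑ c ∈ C, (Pf c).card := Finset.card_biUnion_le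
        _ ≤ ∑ c ∈ C, (k + 1) * (Wf c).card :=
            Finset.sum_le_sum (fun c hc1 => (hf c hc1).count)
        _ = (k + 1) * ∑ c ∈ C, (Wf c).card := by rw [Finset.mul_sum]
        _ = (k + 1) * Wstar.card := by rw [hWcard]
    -- the open sets are connected etc.
    have hOconn : ∀ c ∈ C, Of c = ∅ ∨ (c ∈ Of c ∧ ConnIn G (Of c)) := by
      intro c hc1
      rcases (hf c hc1).ospec with h | ⟨h1, h2, _⟩
      · exact Or.inl h
      · exact Or.inr ⟨h1, h2⟩
    have hUconn : ConnIn G U := connIn_insert_sup G ξ C Of hadjC hOconn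
    by_cases hPhiU : Φ U ≤ τ
    · -- keep U open
      refine ⟨Pstar, Wstar, U, ?_⟩
      refine ⟨?_, ?_, ?_, hPdisjoint, hPU, ?_, ?_, hWbig, hWsub', hWdisj, hPcount⟩
      · intro p hp; obtain ⟨c, hc1, hc2⟩ := (hmemP p).1 hp; exact (hf c hc1).nonempty p hc2
      · intro p hp; obtain ⟨c, hc1, hc2⟩ := (hmemP p).1 hp; exact (hf c hc1).conn p hc2
      · intro p hp; obtain ⟨c, hc1, hc2⟩ := (hmemP p).1 hp; exact (hf c hc1).small p hc2
      · rw [hU, Finset.union_insert, ← hcover]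
      · exact Or.inr ⟨Finset.mem_insert_self _ _, hUconn, hPhiU⟩
    · -- event: close everything
      set Cnz := C.filter (fun c => (Of c).Nonempty) with hCnz
      set Popen := Cnz.image Of with hPopen
      have hCnzC : Cnz ⊆ C := Finset.filter_subset _ _
      have hmemPo : ∀ p, p ∈ Popen ↔ ∃ c ∈ Cnz, Of c = p := fun p => Finset.mem_image
      have hCO : C.sup Of = Popen.sup id := by
        rw [hPopen, Finset.sup_image]
        apply le_antisymm
        · apply Finset.sup_le
          intro c hc1
          by_cases h : (Of c).Nonempty
          · exact Finset.le_sup (f := (id ∘ Of)) (Finset.mem_filter.2 ⟨hc1, h⟩)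
          · rw [Finset.not_nonempty_iff_eq_empty.1 h]
            exact Finset.empty_subset _
        · exact Finset.sup_mono hCnzC
      refine ⟨insert {ξ} (Pstar ∪ Popen), insert U Wstar, ∅, ?_⟩
      have hmemP' : ∀ p, p ∈ insert {ξ} (Pstar ∪ Popen) ↔
          p = {ξ} ∨ p ∈ Pstar ∨ p ∈ Popen := by
        intro p; rw [Finset.mem_insert, Finset.mem_union]
      -- disjointness of all new parts
      have hdisj' : ∀ p ∈ insert {ξ} (Pstar ∪ Popen), ∀ q ∈ insert {ξ} (Pstar ∪ Popen),
          p ≠ q → Disjoint p q := by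
        intro p hp q hq hne
        rcases (hmemP' p).1 hp with rfl | hp | hp
        · rcases (hmemP' q).1 hq with rfl | hq | hq
          · exact absurd rfl hne
          · rw [Finset.disjoint_singleton_left]; exact hxiP q hq
          · obtain ⟨c, hc1, rfl⟩ := (hmemPo q).1 hq
            rw [Finset.disjoint_singleton_left]
            exact fun h => F4 c (hCnzC hc1) (F2 c (hCnzC hc1) h)
        · rcases (hmemP' q).1 hq with rfl | hq | hq
          · rw [Finset.disjoint_singleton_right]; exact hxiP p hp
          · exact hPdisjoint p hp q hq hne
          · obtain ⟨c, hc1, rfl⟩ := (hmemPo q).1 hq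
            exact hPO p hp c (hCnzC hc1)
        · obtain ⟨c, hc1, rfl⟩ := (hmemPo p).1 hp
          rcases (hmemP' q).1 hq with rfl | hq | hq
          · rw [Finset.disjoint_singleton_right]
            exact fun h => F4 c (hCnzC hc1) (F2 c (hCnzC hc1) h)
          · exact (hPO q hq c (hCnzC hc1)).symm
          · obtain ⟨c', hc1', rfl⟩ := (hmemPo q).1 hq
            have hcc : c ≠ c' := fun h => hne (h ▸ rfl)
            exact (F5 c (hCnzC hc1) c' (hCnzC hc1') hcc).mono
              (F2 c (hCnzC hc1)) (F2 c' (hCnzC hc1'))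
      have hxinotW : ∀ w ∈ Wstar, ξ ∉ w := by
        intro w hw hxi
        obtain ⟨c, hc1, hc2, _⟩ := hWsubtree w hw
        exact F4 c hc1 (hc2 hxi)
      have hUnotin : U ∉ Wstar := by
        intro h
        exact hxinotW U h (Finset.mem_insert_self _ _)
      have hsupP' : (insert {ξ} (Pstar ∪ Popen)).sup id = subF G root ξ := by
        rw [Finset.sup_insert, Finset.sup_union, ← hCO]
        rw [← hcover]
        ext z
        simp only [Finset.sup_eq_union, id, Finset.mem_union, Finset.mem_insert,
          Finset.mem_singleton]
      refine ⟨?_, ?_, ?_, hdisj', ?_, ?_, Or.inl rfl, ?_, ?_, ?_, ?_⟩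
      · intro p hp
        rcases (hmemP' p).1 hp with rfl | hp | hp
        · exact ⟨ξ, Finset.mem_singleton_self ξ⟩
        · obtain ⟨c, hc1, hc2⟩ := (hmemP p).1 hp; exact (hf c hc1).nonempty p hc2
        · obtain ⟨c, hc1, rfl⟩ := (hmemPo p).1 hp
          exact (Finset.mem_filter.1 hc1).2
      · intro p hp
        rcases (hmemP' p).1 hp with rfl | hp | hp
        · exact connIn_singleton G ξ
        · obtain ⟨c, hc1, hc2⟩ := (hmemP p).1 hp; exact (hf c hc1).conn p hc2
        · obtain ⟨c, hc1, rfl⟩ := (hmemPo p).1 hp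
          rcases (hf c (hCnzC hc1)).ospec with h | ⟨_, h2, _⟩
          · exact absurd ((Finset.mem_filter.1 hc1).2) (by rw [h]; simp)
          · exact h2
      · intro p hp
        rcases (hmemP' p).1 hp with rfl | hp | hp
        · intro h; simp at h
        · obtain ⟨c, hc1, hc2⟩ := (hmemP p).1 hp; exact (hf c hc1).small p hc2
        · obtain ⟨c, hc1, rfl⟩ := (hmemPo p).1 hp
          rcases (hf c (hCnzC hc1)).ospec with h | ⟨_, _, h3⟩
          · exact absurd ((Finset.mem_filter.1 hc1).2) (by rw [h]; simp)
          · exact fun _ => h3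
      · intro p hp; exact Finset.disjoint_empty_right p
      · rw [Finset.union_empty]; exact hsupP'
      · intro w hw
        rcases Finset.mem_insert.1 hw with rfl | hw
        · exact lt_of_not_ge hPhiU
        · exact hWbig w hw
      · intro w hw
        rcases Finset.mem_insert.1 hw with rfl | hw
        · rw [hsupP', ← hcover, hU]
          intro x hx
          rcases Finset.mem_insert.1 hx with rfl | hx
          · exact Finset.mem_insert_self _ _
          · exact Finset.mem_insert_of_mem (Finset.mem_union_right _ hx)
        · calc w ⊆ Pstar.sup id := hWsub' w hw
            _ ⊆ (insert {ξ} (Pstar ∪ Popen)).sup id :=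
              Finset.sup_mono (fun p hp =>
                Finset.mem_insert_of_mem (Finset.mem_union_left _ hp))
      · intro w hw w' hw' hne
        rcases Finset.mem_insert.1 hw with rfl | hw
        · rcases Finset.mem_insert.1 hw' with rfl | hw'
          · exact absurd rfl hne
          · obtain ⟨c, hc1, hsub, hsubP⟩ := hWsubtree w' hw'
            rw [hU, Finset.disjoint_insert_left, Finset.disjoint_sup_left]
            refine ⟨fun h => hxinotW w' hw' h, ?_⟩
            intro c' hc1'
            by_cases hcc : c' = c
            · subst hcc
              have := (hf c' hc1).podisj
              have hd : Disjoint ((Pf c').sup id) (Of c') := by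
                rw [Finset.disjoint_sup_left]
                intro p hp
                exact (hf c' hc1).podisj p hp
              exact (hd.mono_left hsubP).symm
            · exact (F5 c' hc1' c hc1 hcc).mono (F2 c' hc1') hsub
        · rcases Finset.mem_insert.1 hw' with rfl | hw'
          · obtain ⟨c, hc1, hsub, hsubP⟩ := hWsubtree w hw
            rw [hU, Finset.disjoint_insert_right, Finset.disjoint_sup_right]
            refine ⟨fun h => hxinotW w hw h, ?_⟩
            intro c' hc1'
            by_cases hcc : c' = c
            · subst hcc
              have hd : Disjoint ((Pf c').sup id) (Of c') := by
                rw [Finset.disjoint_sup_left]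
                intro p hp
                exact (hf c' hc1).podisj p hp
              exact (hd.mono_left hsubP)
            · exact ((F5 c hc1 c' hc1' (fun h => hcc h.symm)).mono hsub (F2 c' hc1'))
          · exact hWdisj w hw w' hw' hne
      · calc (insert {ξ} (Pstar ∪ Popen)).card ≤ (Pstar ∪ Popen).card + 1 :=
            Finset.card_insert_le _ _
          _ ≤ Pstar.card + Popen.card + 1 := by
            have := Finset.card_union_le Pstar Popen; omega
          _ ≤ (k + 1) * Wstar.card + k + 1 := by
            have h1 : Popen.card ≤ k := le_trans Finset.card_image_le
              (le_trans (Finset.card_filter_le _ _) (hk ξ))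
            omega
          _ = (k + 1) * (insert U Wstar).card := by
            rw [Finset.card_insert_of_notMem hUnotin]; ring
end TreePartition


/-- Tree partition lemma: if every vertex of a finite rooted tree `G` has at
most `k` children and `Φ` is a nonnegative superadditive set function on
vertex sets with `Φ(V) > 0`, then there is `C(k) > 0` such that for every
`n ≥ 1` the tree can be partitioned into at most `C(k)·n` subtrees
(nonempty vertex sets inducing connected subgraphs) each of which, if it has
at least two vertices, satisfies `Φ ≤ (k+2) Φ(V) / n`. -/
theorem tree_partition_lemma (k : ℕ) :
    ∃ C : ℝ, 0 < C ∧
      ∀ (V : Type) [Fintype V] [DecidableEq V] (G : SimpleGraph V) (root : V),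
        G.IsTree →
        (∀ ξ : V, ({η : V | G.Adj ξ η ∧ G.dist root η = G.dist root ξ + 1} : Set V).ncard ≤ k) →
        ∀ Φ : Finset V → ℝ,
          (∀ s : Finset V, 0 ≤ Φ s) →
          (∀ s t : Finset V, Disjoint s t → Φ s + Φ t ≤ Φ (s ∪ t)) →
          0 < Φ Finset.univ →
          ∀ n : ℕ, 1 ≤ n →
            ∃ P : Finset (Finset V),
              (P.card : ℝ) ≤ C * n ∧
              (∀ s ∈ P, s.Nonempty) ∧
              (∀ s ∈ P, ∀ t ∈ P, s ≠ t → Disjoint s t) ∧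
              (∀ x : V, ∃ s ∈ P, x ∈ s) ∧
              (∀ s ∈ P, (G.induce (↑s : Set V)).Connected) ∧
              (∀ s ∈ P, 2 ≤ s.card → Φ s ≤ (k + 2) * Φ Finset.univ / n) := by
  classical
  refine ⟨(k : ℝ) + 2, by positivity, ?_⟩
  intro V _ _ G root hT hkch Φ h0 hsup hpos n hn
  have hk : ∀ ξ : V, (TreePartition.childS G root ξ).card ≤ k := by
    intro ξ
    have hset : (↑(TreePartition.childS G root ξ) : Set V)
        = {η : V | G.Adj ξ η ∧ G.dist root η = G.dist root ξ + 1} := by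
      ext η; simp [TreePartition.childS]
    have := hkch ξ
    rw [← hset, Set.ncard_coe_finset] at this
    exact this
  have hnR : (0 : ℝ) < n := by exact_mod_cast Nat.lt_of_lt_of_le Nat.zero_lt_one hn
  set τ : ℝ := Φ Finset.univ / n with hτdef
  have hτ : 0 < τ := div_pos hpos hnR
  obtain ⟨P, W, O, spec⟩ := TreePartition.main_rec hT hk Φ h0 hsup τ hτ (Fintype.card V) root
    (Finset.card_le_univ _)
  have hcov : P.sup id ∪ O = Finset.univ := by
    rw [spec.cover, TreePartition.subF_root]
  -- bound on number of events
  have hWn : (W.card : ℝ) ≤ n := by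
    have h1 : (W.card : ℝ) * τ ≤ ∑ w ∈ W, Φ w := by
      have := Finset.card_nsmul_le_sum W Φ τ (fun w hw => (spec.wbig w hw).le)
      simpa [nsmul_eq_mul] using this
    have h2 : ∑ w ∈ W, Φ w ≤ Φ (W.sup id) := TreePartition.phi_sum_le hsup h0 W spec.wdisj
    have h3 : Φ (W.sup id) ≤ Φ Finset.univ := TreePartition.phi_mono hsup h0 (Finset.subset_univ _)
    have h4 : (W.card : ℝ) * τ ≤ (n : ℝ) * τ := by
      have : (n : ℝ) * τ = Φ Finset.univ := by
        rw [hτdef]; field_simp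
      linarith
    exact le_of_mul_le_mul_right (by linarith) hτ
  have hτle : τ ≤ (k + 2) * Φ Finset.univ / n := by
    rw [hτdef, mul_div_assoc]
    have h1 : (1 : ℝ) ≤ (k : ℝ) + 2 := by
      have := Nat.cast_nonneg (α := ℝ) k; linarith
    nlinarith [le_of_lt (div_pos hpos hnR)]
  by_cases hO : O = ∅
  · refine ⟨P, ?_, spec.nonempty, spec.pdisj, ?_, spec.conn, ?_⟩
    · have h1 : (P.card : ℝ) ≤ (k + 1) * W.card := by exact_mod_cast spec.count
      have h2 : ((k : ℝ) + 1) * W.card ≤ ((k : ℝ) + 1) * n := by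
        apply mul_le_mul_of_nonneg_left hWn; positivity
      have h3 : (1 : ℝ) ≤ n := by exact_mod_cast hn
      nlinarith
    · intro x
      have hx : x ∈ P.sup id ∪ O := hcov ▸ Finset.mem_univ x
      rw [hO, Finset.union_empty] at hx
      obtain ⟨s, hs, hxs⟩ := Finset.mem_sup.1 hx
      exact ⟨s, hs, hxs⟩
    · intro s hs h2; exact le_trans (spec.small s hs h2) hτle
  · obtain ⟨hrO, hcO, hφO⟩ := spec.ospec.resolve_left hO
    refine ⟨insert O P, ?_, ?_, ?_, ?_, ?_, ?_⟩
    · have h1 : (P.card : ℝ) ≤ (k + 1) * W.card := by exact_mod_cast spec.count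
      have h2 : ((k : ℝ) + 1) * W.card ≤ ((k : ℝ) + 1) * n := by
        apply mul_le_mul_of_nonneg_left hWn; positivity
      have h3 : (1 : ℝ) ≤ n := by exact_mod_cast hn
      have h4 : ((insert O P).card : ℝ) ≤ (P.card : ℝ) + 1 := by
        exact_mod_cast Finset.card_insert_le O P
      nlinarith
    · intro s hs
      rcases Finset.mem_insert.1 hs with rfl | hs
      · exact ⟨root, hrO⟩
      · exact spec.nonempty s hs
    · intro s hs t ht hne
      rcases Finset.mem_insert.1 hs with h | hs'
      · rcases Finset.mem_insert.1 ht with h' | ht'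
        · exact absurd (h.trans h'.symm) hne
        · rw [h]; exact (spec.podisj t ht').symm
      · rcases Finset.mem_insert.1 ht with h' | ht'
        · rw [h']; exact spec.podisj s hs'
        · exact spec.pdisj s hs' t ht' hne
    · intro x
      have hx : x ∈ P.sup id ∪ O := hcov ▸ Finset.mem_univ x
      rcases Finset.mem_union.1 hx with hx | hx
      · obtain ⟨s, hs, hxs⟩ := Finset.mem_sup.1 hx
        exact ⟨s, Finset.mem_insert_of_mem hs, hxs⟩
      · exact ⟨O, Finset.mem_insert_self _ _, hx⟩
    · intro s hs
      rcases Finset.mem_insert.1 hs with rfl | hs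
      · exact hcO
      · exact spec.conn s hs
    · intro s hs h2
      rcases Finset.mem_insert.1 hs with rfl | hs
      · exact le_trans hφO hτle
      · exact le_trans (spec.small s hs h2) hτle
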